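/- For all integers k, ℓ ≥ 1 and every n ∈ ℤ, the (k+2)×(k+2) determinant det( f(n+ℓ·(i−j), x, q^{j·ℓ}·s)^k )_{i,j=0}^{k+1} is zero. -/

import Mathlib

open Finset

variable {K : Type*} [Field K]

noncomputable def qFibPos (q x t : K) : ℕ → K
  | 0 => 0
  | 1 => 1
  | n + 2 => x * qFibPos q x t (n + 1) + q ^ n * t * qFibPos q x t n

noncomputable def qFibNeg (q x t : K) : ℕ → K
  | 0 => 0
  | 1 => q / t
  | m + 2 => (qFibNeg q x t m - x * qFibNeg q x t (m + 1)) * q ^ (m + 2) / t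

/-- The Carlitz q-Fibonacci polynomial `f(n, x, t)` for `n : ℤ`, defined by `f 0 = 0`,
`f 1 = 1` and `f n = x * f (n-1) + q^(n-2) * t * f (n-2)`, solved backwards for `n < 0`. -/
noncomputable def qFib (q x t : K) : ℤ → K
  | Int.ofNat n => qFibPos q x t n
  | Int.negSucc m => qFibNeg q x t (m + 1)

lemma qFib_natCast (q x t : K) (n : ℕ) : qFib q x t (n : ℤ) = qFibPos q x t n := rfl

lemma qFib_negSucc (q x t : K) (m : ℕ) :
    qFib q x t (Int.negSucc m) = qFibNeg q x t (m + 1) := rfl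

lemma qFib_zero (q x t : K) : qFib q x t 0 = 0 := rfl
lemma qFib_one (q x t : K) : qFib q x t 1 = 1 := rfl
lemma qFib_two (q x t : K) : qFib q x t 2 = x := by
  show qFibPos q x t 2 = x
  simp [qFibPos]

/-- The fundamental recurrence for `qFib`, valid over all of `ℤ`. -/
lemma qFib_rec (q x t : K) (hq : q ≠ 0) (ht : t ≠ 0) (m : ℤ) :
    qFib q x t (m + 2) = x * qFib q x t (m + 1) + q ^ m * t * qFib q x t m := by
  cases m with
  | ofNat n =>
    rw [show (Int.ofNat n + 2 : ℤ) = ((n + 2 : ℕ) : ℤ) by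
          simp only [Int.negSucc_eq, Int.ofNat_eq_coe]; omega,
        show (Int.ofNat n + 1 : ℤ) = ((n + 1 : ℕ) : ℤ) by
          simp only [Int.negSucc_eq, Int.ofNat_eq_coe]; omega,
        show (Int.ofNat n : ℤ) = ((n : ℕ) : ℤ) from rfl,
        qFib_natCast, qFib_natCast, qFib_natCast, zpow_natCast]
    simp [qFibPos]
  | negSucc j =>
    rcases j with _ | _ | j
    · rw [show (Int.negSucc 0 + 2 : ℤ) = ((1 : ℕ) : ℤ) by
            simp only [Int.negSucc_eq, Int.ofNat_eq_coe]; omega,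
          show (Int.negSucc 0 + 1 : ℤ) = ((0 : ℕ) : ℤ) by
            simp only [Int.negSucc_eq, Int.ofNat_eq_coe]; omega,
          qFib_natCast, qFib_natCast, qFib_negSucc, zpow_negSucc]
      simp [qFibPos, qFibNeg]
      field_simp
    · rw [show (Int.negSucc 1 + 2 : ℤ) = ((0 : ℕ) : ℤ) by
            simp only [Int.negSucc_eq, Int.ofNat_eq_coe]; omega,
          show (Int.negSucc 1 + 1 : ℤ) = Int.negSucc 0 by
            simp only [Int.negSucc_eq, Int.ofNat_eq_coe]; omega,
          qFib_natCast, qFib_negSucc, qFib_negSucc, zpow_negSucc]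
      show (0 : K) = x * qFibNeg q x t 1 + (q ^ 2)⁻¹ * t * qFibNeg q x t 2
      simp only [qFibNeg]
      field_simp
      ring
    · rw [show (Int.negSucc (j + 2) + 2 : ℤ) = Int.negSucc j by
            simp only [Int.negSucc_eq, Int.ofNat_eq_coe]; omega,
          show (Int.negSucc (j + 2) + 1 : ℤ) = Int.negSucc (j + 1) by
            simp only [Int.negSucc_eq, Int.ofNat_eq_coe]; omega,
          qFib_negSucc, qFib_negSucc, qFib_negSucc, zpow_negSucc]
      rw [show j + 2 + 1 = (j + 1) + 2 from rfl]
      rw [show qFibNeg q x t ((j + 1) + 2)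
            = (qFibNeg q x t (j + 1) - x * qFibNeg q x t (j + 2)) * q ^ (j + 1 + 2) / t
          from rfl]
      have hqp : (q : K) ^ (j + 2 + 1) ≠ 0 := pow_ne_zero _ hq
      field_simp
      ring

/-- Two solutions of the recurrence agreeing at `0` and `1` agree everywhere. -/
lemma qFib_sol_unique (q x t : K) (hq : q ≠ 0) (ht : t ≠ 0) (F G : ℤ → K)
    (hF : ∀ m : ℤ, F (m + 2) = x * F (m + 1) + q ^ m * t * F m)
    (hG : ∀ m : ℤ, G (m + 2) = x * G (m + 1) + q ^ m * t * G m)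
    (h0 : F 0 = G 0) (h1 : F 1 = G 1) : ∀ m : ℤ, F m = G m := by
  have key : ∀ m : ℤ, F m = G m ∧ F (m + 1) = G (m + 1) := by
    intro m
    induction m using Int.induction_on with
    | zero => exact ⟨h0, by simpa using h1⟩
    | succ i ih =>
      refine ⟨ih.2, ?_⟩
      have e : ((i : ℤ) + 1) + 1 = (i : ℤ) + 2 := by ring
      rw [e, hF i, hG i, ih.1, ih.2]
    | pred i ih =>
      constructor
      · have hF' := hF (-(i : ℤ) - 1); have hG' := hG (-(i : ℤ) - 1)
        have e1 : -(i : ℤ) - 1 + 2 = -(i : ℤ) + 1 := by ring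
        have e2 : -(i : ℤ) - 1 + 1 = -(i : ℤ) := by ring
        rw [e1, e2] at hF' hG'
        have hc : q ^ (-(i : ℤ) - 1) * t ≠ 0 := mul_ne_zero (zpow_ne_zero _ hq) ht
        refine mul_left_cancel₀ hc ?_
        linear_combination hG' - hF' + ih.2 - x * ih.1
      · have e : -(i : ℤ) - 1 + 1 = -(i : ℤ) := by ring
        rw [e]; exact ih.1
  exact fun m => (key m).1

/-- Every solution of the recurrence is a combination of the two basic solutions
`qFib q x t` and `m ↦ qFib q x (t/q) (m+1)`. -/
lemma qFib_rep (q x t : K) (hq : q ≠ 0) (ht : t ≠ 0) (F : ℤ → K)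
    (hF : ∀ m : ℤ, F (m + 2) = x * F (m + 1) + q ^ m * t * F m) :
    ∀ m : ℤ, F m = (F 1 - x * F 0) * qFib q x t m + F 0 * qFib q x (t / q) (m + 1) := by
  have htq : t / q ≠ 0 := div_ne_zero ht hq
  set G : ℤ → K := fun m => (F 1 - x * F 0) * qFib q x t m + F 0 * qFib q x (t / q) (m + 1)
    with hGdef
  have hco : ∀ m : ℤ, q ^ (m + 1) * (t / q) = q ^ m * t := by
    intro m
    rw [zpow_add₀ hq, zpow_one]
    field_simp
  have hG : ∀ m : ℤ, G (m + 2) = x * G (m + 1) + q ^ m * t * G m := by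
    intro m
    have h2 := qFib_rec q x (t / q) hq htq (m + 1)
    rw [hco] at h2
    simp only [hGdef]
    rw [show (m + 2 : ℤ) + 1 = (m + 1) + 2 by ring, h2, qFib_rec q x t hq ht m,
        show (m + 1 : ℤ) + 1 = m + 1 + 1 from rfl]
    ring
  exact qFib_sol_unique q x t hq ht F G hF hG (by simp [hGdef, qFib_zero, qFib_one])
    (by norm_num [hGdef, qFib_zero, qFib_one, qFib_two]; ring)

theorem det_qFib_pow_eq_zero' (q x s : K) (hq : q ≠ 0) (hs : s ≠ 0)
    (k ℓ : ℕ) (hk : 1 ≤ k) (hℓ : 1 ≤ ℓ) (n : ℤ) :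
    Matrix.det (Matrix.of fun i j : Fin (k + 2) =>
      qFib q x (q ^ ((j : ℕ) * ℓ) * s) (n + ℓ * ((i : ℕ) - (j : ℕ) : ℤ)) ^ k) = 0 := by
  classical
  -- the two basic solutions evaluated along the rows
  set a : Fin (k + 2) → K := fun i => qFib q x s (n + ℓ * (i : ℕ)) with ha
  set b : Fin (k + 2) → K := fun i => qFib q x (s / q) (n + ℓ * (i : ℕ) + 1) with hb
  -- column solutions
  set H : Fin (k + 2) → ℤ → K :=
    fun j m => qFib q x (q ^ ((j : ℕ) * ℓ) * s) (m - ((j : ℕ) * ℓ : ℕ)) with hH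
  set u : Fin (k + 2) → K := fun j => H j 1 - x * H j 0 with hu
  set v : Fin (k + 2) → K := fun j => H j 0 with hv
  have hHrec : ∀ (j : Fin (k + 2)) (m : ℤ),
      H j (m + 2) = x * H j (m + 1) + q ^ m * s * H j m := by
    intro j m
    have ht' : q ^ ((j : ℕ) * ℓ) * s ≠ 0 := mul_ne_zero (pow_ne_zero _ hq) hs
    have h := qFib_rec q x (q ^ ((j : ℕ) * ℓ) * s) hq ht' (m - ((j : ℕ) * ℓ : ℕ))
    have e2 : m - ((j : ℕ) * ℓ : ℕ) + 2 = (m + 2) - ((j : ℕ) * ℓ : ℕ) := by ring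
    have e1 : m - ((j : ℕ) * ℓ : ℕ) + 1 = (m + 1) - ((j : ℕ) * ℓ : ℕ) := by ring
    rw [e2, e1] at h
    have hc : q ^ (m - ((j : ℕ) * ℓ : ℕ)) * (q ^ ((j : ℕ) * ℓ) * s) = q ^ m * s := by
      rw [← zpow_natCast q ((j : ℕ) * ℓ), ← mul_assoc, ← zpow_add₀ hq]
      norm_num
    rw [hc] at h
    simpa [hH] using h
  have hrep : ∀ (j : Fin (k + 2)) (m : ℤ),
      H j m = u j * qFib q x s m + v j * qFib q x (s / q) (m + 1) := by
    intro j m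
    simpa [hu, hv] using qFib_rep q x s hq hs (H j) (hHrec j) m
  have hdecomp : ∀ i j : Fin (k + 2),
      qFib q x (q ^ ((j : ℕ) * ℓ) * s) (n + ℓ * ((i : ℕ) - (j : ℕ) : ℤ))
        = u j * a i + v j * b i := by
    intro i j
    have harg : n + (ℓ : ℤ) * (((i : ℕ) : ℤ) - ((j : ℕ) : ℤ))
        = (n + ℓ * (i : ℕ)) - ((j : ℕ) * ℓ : ℕ) := by push_cast; ring
    rw [harg]
    have := hrep j (n + ℓ * (i : ℕ))
    simpa [hH, ha, hb] using this
  -- rank factorization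
  set B : Matrix (Fin (k + 2)) (Fin (k + 2)) K := Matrix.of fun i r =>
    if (r : ℕ) ≤ k then a i ^ (r : ℕ) * b i ^ (k - (r : ℕ)) * (k.choose (r : ℕ) : K)
    else 0 with hB
  set C : Matrix (Fin (k + 2)) (Fin (k + 2)) K := Matrix.of fun r j =>
    if (r : ℕ) ≤ k then u j ^ (r : ℕ) * v j ^ (k - (r : ℕ)) else 0 with hC
  have key : ∀ f : ℕ → K,
      ∑ r ∈ Finset.range (k + 2), (if r ≤ k then f r else 0)
        = ∑ r ∈ Finset.range (k + 1), f r := by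
    intro f
    rw [show k + 2 = (k + 1) + 1 from rfl, Finset.sum_range_succ, if_neg (by omega), add_zero]
    exact Finset.sum_congr rfl fun r hr => if_pos (by simp only [Finset.mem_range] at hr; omega)
  have hM : (Matrix.of fun i j : Fin (k + 2) =>
      qFib q x (q ^ ((j : ℕ) * ℓ) * s) (n + ℓ * ((i : ℕ) - (j : ℕ) : ℤ)) ^ k) = B * C := by
    ext i j
    rw [Matrix.mul_apply]
    simp only [Matrix.of_apply, hB, hC]
    rw [hdecomp i j, add_pow]
    rw [Fin.sum_univ_eq_sum_range (fun r : ℕ =>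
      (if r ≤ k then a i ^ r * b i ^ (k - r) * (k.choose r : K) else 0) *
      (if r ≤ k then u j ^ r * v j ^ (k - r) else 0)) (k + 2)]
    rw [show (∑ r ∈ Finset.range (k + 2),
        (if r ≤ k then a i ^ r * b i ^ (k - r) * (k.choose r : K) else 0) *
        (if r ≤ k then u j ^ r * v j ^ (k - r) else 0))
        = ∑ r ∈ Finset.range (k + 2),
          (if r ≤ k then a i ^ r * b i ^ (k - r) * (k.choose r : K)
            * (u j ^ r * v j ^ (k - r)) else 0) from
      Finset.sum_congr rfl fun r _ => by by_cases h : r ≤ k <;> simp [h]]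
    rw [key]
    refine Finset.sum_congr rfl fun r hr => ?_
    rw [mul_pow, mul_pow]
    ring
  have hBdet : B.det = 0 := by
    apply Matrix.det_eq_zero_of_column_eq_zero (Fin.last (k + 1))
    intro i
    simp only [hB, Matrix.of_apply, Fin.val_last]
    rw [if_neg (by omega)]
  rw [hM, Matrix.det_mul, hBdet, zero_mul]
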